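/- For each α ∈ (0, 1/2) the equation 1/(r − α) = e^{1/r} − 1 has a unique solution r = r^∞(α) with r^∞(α) > α. -/

import Mathlib

open Real Set

-- key inequality: t^2 * exp t < (exp t - 1)^2 for t > 0
lemma key_ineq_13 {t : ℝ} (ht : 0 < t) : t ^ 2 * Real.exp t < (Real.exp t - 1) ^ 2 := by
  have h1 : t / 2 < Real.sinh (t / 2) := Real.self_lt_sinh_iff.mpr (by linarith)
  rw [Real.sinh_eq] at h1
  have he : Real.exp (t / 2) > 0 := Real.exp_pos _
  have h2 : t * Real.exp (t / 2) < Real.exp t - 1 := by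
    have := mul_lt_mul_of_pos_right h1 he
    have hx : Real.exp (t/2) * Real.exp (t/2) = Real.exp t := by
      rw [← Real.exp_add]; ring_nf
    have hy : Real.exp (-(t/2)) * Real.exp (t/2) = 1 := by
      rw [← Real.exp_add]; simp
    nlinarith
  have hpos : 0 < t * Real.exp (t / 2) := by positivity
  have hx : Real.exp (t/2) * Real.exp (t/2) = Real.exp t := by
    rw [← Real.exp_add]; ring_nf
  nlinarith

-- g(r) = r - 1/(exp(1/r)-1)
noncomputable def g13 (r : ℝ) : ℝ := r - (Real.exp (1 / r) - 1)⁻¹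

lemma exp_sub_one_pos_13 {r : ℝ} (hr : 0 < r) : 0 < Real.exp (1 / r) - 1 := by
  have h : (0:ℝ) < 1 / r := by positivity
  have := Real.add_one_lt_exp (ne_of_gt h)
  linarith

lemma g13_deriv {r : ℝ} (hr : 0 < r) :
    HasDerivAt g13 (1 - Real.exp (1/r) / (r^2 * (Real.exp (1/r) - 1)^2)) r := by
  have hne : r ≠ 0 := ne_of_gt hr
  have hE : Real.exp (1/r) - 1 ≠ 0 := ne_of_gt (exp_sub_one_pos_13 hr)
  have h1 : HasDerivAt (fun x : ℝ => 1 / x) (-(r ^ 2)⁻¹) r := by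
    simpa using (hasDerivAt_inv hne)
  have h2 : HasDerivAt (fun x : ℝ => Real.exp (1 / x) - 1)
      (Real.exp (1/r) * -(r ^ 2)⁻¹) r := ((Real.hasDerivAt_exp (1/r)).comp r h1).sub_const 1
  have h3 := h2.inv hE
  have h4 := (hasDerivAt_id r).sub h3
  convert h4 using 1
  · rfl
  · rfl
  · rfl
  · field_simp

lemma g13_mono : StrictMonoOn g13 (Ioi 0) := by
  apply strictMonoOn_of_deriv_pos (convex_Ioi 0)
  · intro x hx
    have hx0 : (0:ℝ) < x := hx
    exact (g13_deriv hx0).continuousAt.continuousWithinAt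
  · intro x hx
    rw [interior_Ioi] at hx
    have hx0 : (0:ℝ) < x := hx
    rw [(g13_deriv hx0).deriv]
    have hx' : (0:ℝ) < 1 / x := by positivity
    have hk := key_ineq_13 hx'
    have hE : 0 < Real.exp (1/x) - 1 := exp_sub_one_pos_13 hx0
    have hx2 : (1/x)^2 = (x^2)⁻¹ := by field_simp
    rw [hx2] at hk
    have hden : 0 < x^2 * (Real.exp (1/x) - 1)^2 := by positivity
    rw [sub_pos, div_lt_one hden]
    have hxx : 0 < x^2 := by positivity
    calc Real.exp (1/x) = x^2 * ((x^2)⁻¹ * Real.exp (1/x)) := by field_simp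
      _ < x^2 * (Real.exp (1/x) - 1)^2 := by
          exact mul_lt_mul_of_pos_left hk hxx

theorem stmt_13 (α : ℝ) (hα : 0 < α) (hα2 : α < 1 / 2) :
    ∃! r : ℝ, α < r ∧ 1 / (r - α) = Real.exp (1 / r) - 1 := by
  have hequiv : ∀ r : ℝ, 0 < r →
      ((α < r ∧ 1 / (r - α) = Real.exp (1 / r) - 1) ↔ g13 r = α) := by
    intro r hr
    have hE := exp_sub_one_pos_13 hr
    constructor
    · rintro ⟨h1, h2⟩
      have hra : 0 < r - α := by linarith
      unfold g13
      rw [← h2]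
      field_simp
      ring
    · intro h
      unfold g13 at h
      have hinv : 0 < (Real.exp (1/r) - 1)⁻¹ := by positivity
      have h1 : α < r := by linarith
      refine ⟨h1, ?_⟩
      have hra : r - α = (Real.exp (1/r) - 1)⁻¹ := by linarith
      rw [hra]
      field_simp
  -- existence via IVT
  have h2α : 0 < 1 - 2*α := by linarith
  set a := α / 2 with ha
  set b := α / (1 - 2*α) + 1 with hb
  have hapos : 0 < a := by rw [ha]; positivity
  have hb1 : 1 ≤ b := by
    rw [hb]
    have : 0 ≤ α / (1 - 2*α) := by positivity
    linarith
  have hab : a ≤ b := by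
    have h1 : a < 1 := by rw [ha]; linarith
    linarith
  have hga : g13 a < α := by
    have hE := exp_sub_one_pos_13 hapos
    have h1 : 0 < (Real.exp (1/a) - 1)⁻¹ := by positivity
    have h2 : a < α := by rw [ha]; linarith
    unfold g13
    linarith
  have hgb : α < g13 b := by
    have hbpos : 0 < b := by linarith
    have hE := exp_sub_one_pos_13 hbpos
    have hba : 0 < b - α := by linarith
    have hq := Real.quadratic_le_exp_of_nonneg (x := 1/b) (by positivity)
    have hkey : b * (1 - 2*α) > α := by
      rw [hb]
      have : α / (1 - 2*α) * (1 - 2*α) = α := div_mul_cancel₀ _ h2α.ne'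
      nlinarith
    have h5 : 1 < (1/b + (1/b)^2/2) * (b - α) := by
      have hid : (1/b + (1/b)^2/2) * (b - α) - 1 = (b*(1-2*α) - α) / (2*b^2) := by
        field_simp
        ring
      have hnum : 0 < (b*(1-2*α) - α) / (2*b^2) :=
        div_pos (by linarith) (by positivity)
      linarith
    have hE2 : 1/b + (1/b)^2/2 ≤ Real.exp (1/b) - 1 := by linarith
    have h6 : 1 < (Real.exp (1/b) - 1) * (b - α) :=
      lt_of_lt_of_le h5 (mul_le_mul_of_nonneg_right hE2 hba.le)
    have hlt : 1/(b-α) < Real.exp (1/b) - 1 := by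
      rw [div_lt_iff₀ hba]; linarith
    have hinv : (Real.exp (1/b) - 1)⁻¹ < b - α :=
      (inv_lt_comm₀ hE hba).mpr (by rw [inv_eq_one_div]; exact hlt)
    unfold g13
    linarith
  have hcont : ContinuousOn g13 (Icc a b) := by
    intro x hx
    have hx0 : 0 < x := lt_of_lt_of_le hapos hx.1
    exact (g13_deriv hx0).continuousAt.continuousWithinAt
  have hmem : α ∈ Icc (g13 a) (g13 b) := ⟨le_of_lt hga, le_of_lt hgb⟩
  obtain ⟨r, hrIcc, hgr⟩ := intermediate_value_Icc hab hcont hmem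
  have hr0 : 0 < r := lt_of_lt_of_le hapos hrIcc.1
  refine ⟨r, (hequiv r hr0).mpr hgr, ?_⟩
  rintro s ⟨hs1, hs2⟩
  have hs0 : 0 < s := lt_trans hα hs1
  have hgs : g13 s = α := (hequiv s hs0).mp ⟨hs1, hs2⟩
  exact g13_mono.injOn (mem_Ioi.mpr hs0) (mem_Ioi.mpr hr0) (by rw [hgs, hgr])
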